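/- Let a ∈ (1/2, 1), n ≥ 1, and suppose n₁/n > a. Then the strictly concave function g(p) = n₁·log(pa + (1−p)(1−a)) + (n−n₁)·log(p(1−a) + (1−p)a) on [0,1] is maximized at the boundary point p = 1. -/
import Mathlib


/-- When the observed fraction of ones exceeds a, the D-assumption log-likelihood
is maximized at the boundary p = 1. -/
theorem da_loglik_boundary_max (a : ℝ) (ha : 1/2 < a) (ha1 : a < 1)
    (n n₁ : ℕ) (hn : 1 ≤ n) (h : n₁ ≤ n) (hfrac : a < (n₁ : ℝ) / n) :
    let g : ℝ → ℝ := fun p =>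
      (n₁ : ℝ) * Real.log (p * a + (1 - p) * (1 - a)) +
      ((n : ℝ) - n₁) * Real.log (p * (1 - a) + (1 - p) * a)
    ∀ p ∈ Set.Icc (0:ℝ) 1, g p ≤ g 1 := by
  intro g p hp
  obtain ⟨hp0, hp1⟩ := hp
  have hn0 : (0:ℝ) < n := by exact_mod_cast Nat.lt_of_lt_of_le Nat.zero_lt_one hn
  have hna : (n:ℝ) * a < n₁ := by
    rw [lt_div_iff₀ hn0] at hfrac; linarith
  have ha0 : (0:ℝ) < a := by linarith
  have ha1' : (0:ℝ) < 1 - a := by linarith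
  set x : ℝ := p * a + (1 - p) * (1 - a) with hxdef
  set y : ℝ := p * (1 - a) + (1 - p) * a with hydef
  have hx0 : 0 < x := by nlinarith
  have hy0 : 0 < y := by nlinarith
  have hxa : x ≤ a := by nlinarith
  have hxy : y = 1 - x := by simp [hxdef, hydef]; ring
  have h1 : Real.log x - Real.log a ≤ (x - a) / a := by
    have h' := Real.log_le_sub_one_of_pos (div_pos hx0 ha0)
    rw [Real.log_div hx0.ne' ha0.ne'] at h'
    have : (x - a) / a = x / a - 1 := by field_simp
    linarith
  have h2 : Real.log y - Real.log (1 - a) ≤ (y - (1 - a)) / (1 - a) := by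
    have h' := Real.log_le_sub_one_of_pos (div_pos hy0 ha1')
    rw [Real.log_div hy0.ne' ha1'.ne'] at h'
    have : (y - (1 - a)) / (1 - a) = y / (1 - a) - 1 := by field_simp
    linarith
  have hg1 : g 1 = (n₁ : ℝ) * Real.log a + ((n : ℝ) - n₁) * Real.log (1 - a) := by
    simp [g]
  have hgp : g p = (n₁ : ℝ) * Real.log x + ((n : ℝ) - n₁) * Real.log y := rfl
  rw [hg1, hgp]
  have hn₁0 : (0:ℝ) ≤ n₁ := Nat.cast_nonneg _
  have hnn₁ : (0:ℝ) ≤ (n:ℝ) - n₁ := by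
    have : (n₁:ℝ) ≤ n := Nat.cast_le.mpr h
    linarith
  have b1 : (n₁ : ℝ) * (Real.log x - Real.log a) ≤ (n₁ : ℝ) * ((x - a) / a) :=
    mul_le_mul_of_nonneg_left h1 hn₁0
  have b2 : ((n:ℝ) - n₁) * (Real.log y - Real.log (1 - a)) ≤
      ((n:ℝ) - n₁) * ((y - (1 - a)) / (1 - a)) :=
    mul_le_mul_of_nonneg_left h2 hnn₁
  have key : (n₁ : ℝ) * ((x - a) / a) + ((n:ℝ) - n₁) * ((y - (1 - a)) / (1 - a)) ≤ 0 := by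
    rw [hxy]
    have e : (n₁:ℝ) * ((x - a) / a) + ((n:ℝ) - n₁) * (((1 - x) - (1 - a)) / (1 - a)) =
        ((x - a) * ((n₁:ℝ) - n * a)) / (a * (1 - a)) := by
      field_simp; ring
    rw [e]
    apply div_nonpos_of_nonpos_of_nonneg
    · exact mul_nonpos_of_nonpos_of_nonneg (by linarith) (by linarith)
    · positivity
  linarith
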